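/- Consider the random-field Ising model: in addition to arbitrary interactions J_B (B ∈ 𝔅, each B with |B| ≥ 2, deterministic or random with any densities), each site i ∈ V carries an independent Gaussian random field h_i ~ N(J_0, Λ²) with Λ > 0, so the Hamiltonian is H(σ) = −∑_{B∈𝔅} J_B σ_B − ∑_{i∈V} h_i σ_i. Then for every site i ∈ V, the quenched average of the square of the local magnetization satisfies E[ tanh²(β h) ]_{N(0, Λ²)} ≤ E[ ⟨σ_i⟩² ], where the left-hand side is the expectation of tanh²(β x) under a centered Gaussian with variance Λ² and is independent of J_0 and of all the interactions J_B. -/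

import Mathlib

open MeasureTheory Real Finset ProbabilityTheory
open scoped NNReal ENNReal

/-- The spin value of a Boolean: `true ↦ 1`, `false ↦ -1`. -/
noncomputable def spinVal (b : Bool) : ℝ := if b then 1 else -1

/-- `σ_B = ∏ i ∈ B, σ_i`. -/
noncomputable def sigmaSet {V : Type} (σ : V → Bool) (B : Finset V) : ℝ :=
  ∏ i ∈ B, spinVal (σ i)

/-- The Gibbs average `⟨σ_i⟩` of the spin at site `i`, for the random-field Ising model
with Hamiltonian `H(σ) = -∑_{B ∈ ℬ} J_B σ_B - ∑_{j ∈ V} h_j σ_j`. -/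
noncomputable def rfGibbs {V : Type} [Fintype V] [DecidableEq V] (β : ℝ)
    (ℬ : Finset (Finset V)) (J : ℬ → ℝ) (h : V → ℝ) (i : V) : ℝ :=
  (∑ σ : V → Bool, spinVal (σ i) *
      Real.exp (β * ((∑ B : ℬ, J B * sigmaSet σ (B : Finset V)) + ∑ j, h j * spinVal (σ j)))) /
  (∑ σ : V → Bool,
      Real.exp (β * ((∑ B : ℬ, J B * sigmaSet σ (B : Finset V)) + ∑ j, h j * spinVal (σ j))))


lemma tanh_explicit (y : ℝ) : tanh y = (exp y - exp (-y)) / (exp y + exp (-y)) := by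
  have h : exp y + exp (-y) ≠ 0 := by positivity
  rw [Real.tanh_eq_sinh_div_cosh, Real.sinh_eq, Real.cosh_eq]
  field_simp

lemma tanh_ratio (y : ℝ) : tanh y = (exp (2*y) - 1) / (exp (2*y) + 1) := by
  have h2 : exp (2*y) = exp y * exp y := by rw [← exp_add]; ring_nf
  have hy := exp_pos y
  rw [tanh_explicit, Real.exp_neg, h2]
  field_simp

lemma tanh_mono : Monotone Real.tanh := by
  intro a b hab
  rw [tanh_ratio, tanh_ratio]
  have ha := exp_pos (2*a)
  have hb := exp_pos (2*b)
  have h : exp (2*a) ≤ exp (2*b) := exp_le_exp.mpr (by linarith)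
  rw [div_le_div_iff₀ (by positivity) (by positivity)]
  nlinarith

lemma abs_tanh_le_one (y : ℝ) : |tanh y| ≤ 1 := by
  rw [tanh_explicit, abs_div]
  have h : 0 < exp y + exp (-y) := by positivity
  rw [abs_of_pos h, div_le_one h]
  have := exp_pos y
  have := exp_pos (-y)
  rw [abs_sub_le_iff]
  constructor <;> linarith

lemma abs_tanh (y : ℝ) : |tanh y| = tanh |y| := by
  rcases le_or_gt 0 y with hy | hy
  · rw [abs_of_nonneg hy, abs_of_nonneg]
    have := tanh_mono hy
    simpa using this
  · rw [abs_of_neg hy, Real.tanh_neg, abs_of_nonpos]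
    have := tanh_mono hy.le
    simpa using this

lemma tanh_sq_le_one (y : ℝ) : tanh y ^ 2 ≤ 1 :=
  (sq_le_one_iff_abs_le_one _).mpr (abs_tanh_le_one y)

lemma tanh_sq_mono {a b : ℝ} (h : |a| ≤ |b|) : tanh a ^ 2 ≤ tanh b ^ 2 := by
  rw [← sq_abs (tanh a), ← sq_abs (tanh b), abs_tanh, abs_tanh]
  have h0 : 0 ≤ tanh |a| := by have := tanh_mono (abs_nonneg a); simpa using this
  exact pow_le_pow_left₀ h0 (tanh_mono h) 2

lemma continuous_tanh : Continuous Real.tanh := by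
  have : Real.tanh = fun x => Real.sinh x / Real.cosh x := by
    funext x; exact Real.tanh_eq_sinh_div_cosh x
  rw [this]
  exact Real.continuous_sinh.div Real.continuous_cosh fun x => (Real.cosh_pos x).ne'

lemma ratio_tanh {a b : ℝ} (ha : 0 < a) (hb : 0 < b) (x : ℝ) :
    (a * exp x - b * exp (-x)) / (a * exp x + b * exp (-x))
      = tanh (x + (log a - log b) / 2) := by
  have h1 : a * exp x = exp ((log a + log b)/2) * exp (x + (log a - log b)/2) := by
    rw [← Real.exp_add]
    have he : (log a + log b)/2 + (x + (log a - log b)/2) = log a + x := by ring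
    rw [he, Real.exp_add, Real.exp_log ha]
  have h2 : b * exp (-x) = exp ((log a + log b)/2) * exp (-(x + (log a - log b)/2)) := by
    rw [← Real.exp_add]
    have he : (log a + log b)/2 + -(x + (log a - log b)/2) = log b + -x := by ring
    rw [he, Real.exp_add, Real.exp_log hb]
  rw [h1, h2, ← mul_sub, ← mul_add, mul_div_mul_left _ _ (exp_ne_zero _), tanh_explicit]

lemma integral_gaussianReal_density {v : ℝ≥0} (hv : v ≠ 0) (g : ℝ → ℝ) :
    ∫ x, g x ∂(gaussianReal 0 v) = ∫ x, g x * gaussianPDFReal 0 v x := by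
  rw [gaussianReal_of_var_ne_zero _ hv]
  have hmeas : Measurable fun x => (gaussianPDFReal 0 v x).toNNReal :=
    (measurable_gaussianPDFReal 0 v).real_toNNReal
  have hd : gaussianPDF 0 v = fun x => ((gaussianPDFReal 0 v x).toNNReal : ℝ≥0∞) := rfl
  rw [hd, integral_withDensity_eq_integral_smul hmeas]
  congr 1
  funext x
  rw [NNReal.smul_def, Real.coe_toNNReal _ (gaussianPDFReal_nonneg 0 v x), smul_eq_mul, mul_comm]

lemma gaussianPDFReal_even (v : ℝ≥0) (x : ℝ) :
    gaussianPDFReal 0 v (-x) = gaussianPDFReal 0 v x := by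
  simp [gaussianPDFReal]

lemma gaussianPDFReal_anti {v : ℝ≥0} {a b : ℝ} (h : |a| ≤ |b|) :
    gaussianPDFReal 0 v b ≤ gaussianPDFReal 0 v a := by
  rw [gaussianPDFReal, gaussianPDFReal]
  have hsq : a ^ 2 ≤ b ^ 2 := by
    rw [← sq_abs a, ← sq_abs b]
    exact pow_le_pow_left₀ (abs_nonneg a) h 2
  have hC : (0:ℝ) ≤ (Real.sqrt (2 * π * v))⁻¹ := by positivity
  refine mul_le_mul_of_nonneg_left (exp_le_exp.mpr ?_) hC
  rcases eq_or_ne v 0 with hv | hv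
  · simp [hv]
  · have hv' : (0:ℝ) < 2 * v := by
      have : (0:ℝ) < (v:ℝ) := by positivity
      linarith
    rw [sub_zero, sub_zero, neg_div, neg_div, neg_le_neg_iff]
    gcongr

lemma gaussian_tanh_sq_shift {v : ℝ≥0} (hv : v ≠ 0) {β : ℝ} (hβ : 0 < β) (s : ℝ) :
    ∫ x, tanh (β * x) ^ 2 ∂(gaussianReal 0 v)
      ≤ ∫ x, tanh (β * x + s) ^ 2 ∂(gaussianReal 0 v) := by
  set φ : ℝ → ℝ := gaussianPDFReal 0 v with hφ
  set T : ℝ → ℝ := fun y => tanh (β * y) ^ 2 with hT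
  set m : ℝ := s / β with hm
  have harg : ∀ x : ℝ, β * x + s = β * (x + m) := fun x => by
    rw [hm, mul_add, mul_div_assoc', mul_comm β s, mul_div_assoc, div_self hβ.ne', mul_one]
  have hTmeas : Measurable T := ((continuous_tanh.comp (continuous_const.mul continuous_id)).pow 2).measurable
  have hTbd : ∀ y, ‖T y‖ ≤ 1 := fun y => by
    rw [Real.norm_eq_abs, abs_of_nonneg (sq_nonneg _)]
    exact tanh_sq_le_one _
  have hφint : Integrable φ := integrable_gaussianPDFReal 0 v
  have hφm : Integrable (fun y => φ (y - m)) := hφint.comp_sub_right m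
  -- integrability of the four products
  have int1 : Integrable (fun y => T y * φ (y - m)) :=
    hφm.bdd_mul hTmeas.aestronglyMeasurable (ae_of_all _ hTbd)
  have int2 : Integrable (fun y => T y * φ y) :=
    hφint.bdd_mul hTmeas.aestronglyMeasurable (ae_of_all _ hTbd)
  have hTm : Measurable fun y => T (m - y) :=
    hTmeas.comp (measurable_const.sub measurable_id)
  have hTmbd : ∀ y, ‖T (m - y)‖ ≤ 1 := fun y => hTbd _
  have int3 : Integrable (fun y => T (m - y) * φ y) :=
    hφint.bdd_mul hTm.aestronglyMeasurable (ae_of_all _ hTmbd)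
  have int4 : Integrable (fun y => T (m - y) * φ (y - m)) :=
    hφm.bdd_mul hTm.aestronglyMeasurable (ae_of_all _ hTmbd)
  rw [integral_gaussianReal_density hv, integral_gaussianReal_density hv]
  simp_rw [harg]
  -- now goal : ∫ x, T x * φ x ≤ ∫ x, T (x + m) * φ x
  have e1 : ∫ x, T (x + m) * φ x = ∫ y, T y * φ (y - m) := by
    have := integral_add_right_eq_self (μ := (volume : Measure ℝ))
      (fun y => T y * φ (y - m)) m
    rw [← this]
    congr 1
    funext x
    rw [add_sub_cancel_right]
  show ∫ x, T x * φ x ≤ ∫ x, T (x + m) * φ x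
  rw [e1]
  have key : ∀ y, 0 ≤ (T y - T (m - y)) * (φ (y - m) - φ y) := by
    intro y
    rcases le_total (|y|) (|m - y|) with hc | hc
    · have h1 : T y ≤ T (m - y) := by
        apply tanh_sq_mono
        rw [abs_mul, abs_mul]
        exact mul_le_mul_of_nonneg_left hc (abs_nonneg β)
      have h2 : φ (y - m) ≤ φ y := by
        apply gaussianPDFReal_anti
        rw [abs_sub_comm y m]; exact hc
      exact mul_nonneg_iff.mpr (Or.inr ⟨by linarith, by linarith⟩)
    · have h1 : T (m - y) ≤ T y := by
        apply tanh_sq_mono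
        rw [abs_mul, abs_mul]
        exact mul_le_mul_of_nonneg_left hc (abs_nonneg β)
      have h2 : φ y ≤ φ (y - m) := by
        apply gaussianPDFReal_anti
        rw [abs_sub_comm y m]; exact hc
      exact mul_nonneg (by linarith) (by linarith)
  have hrefl : ∫ y, (T y * φ (y - m) - T y * φ y)
      = ∫ y, (T (m - y) * φ y - T (m - y) * φ (y - m)) := by
    have := integral_sub_left_eq_self (μ := (volume : Measure ℝ))
      (fun y => T y * φ (y - m) - T y * φ y) m
    rw [← this]
    congr 1
    funext y
    have hev : φ (m - y - m) = φ y := by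
      rw [show m - y - m = -y by ring, hφ, gaussianPDFReal_even]
    have hev2 : φ (m - y) = φ (y - m) := by
      rw [show m - y = -(y - m) by ring, hφ, gaussianPDFReal_even]
    rw [hev, hev2]
  have int12 : Integrable (fun y => T y * φ (y - m) - T y * φ y) := int1.sub int2
  have int34 : Integrable (fun y => T (m - y) * φ y - T (m - y) * φ (y - m)) := int3.sub int4
  have key' : ∀ y, 0 ≤ (T y * φ (y - m) - T y * φ y)
      + (T (m - y) * φ y - T (m - y) * φ (y - m)) := fun y => by
    have := key y; nlinarith [key y]
  have hpos : (0:ℝ) ≤ (∫ y, (T y * φ (y - m) - T y * φ y))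
      + ∫ y, (T (m - y) * φ y - T (m - y) * φ (y - m)) :=
    le_of_le_of_eq (integral_nonneg key') (integral_add int12 int34)
  have hd : (∫ y, (T y * φ (y - m) - T y * φ y))
      = (∫ y, T y * φ (y - m)) - ∫ y, T y * φ y := integral_sub int1 int2
  rw [← hrefl] at hpos
  linarith

section Cav

variable {V : Type} [Fintype V] [DecidableEq V]

/-- cavity weight: the Boltzmann weight with the field at site `i` removed. -/
noncomputable def cavW (β : ℝ) (ℬ : Finset (Finset V)) (J : ℬ → ℝ) (i : V) (h : V → ℝ)
    (σ : V → Bool) : ℝ :=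
  Real.exp (β * ((∑ B : ℬ, J B * sigmaSet σ (B : Finset V))
    + ∑ j, (if j = i then 0 else h j * spinVal (σ j))))

noncomputable def cavA (β : ℝ) (ℬ : Finset (Finset V)) (J : ℬ → ℝ) (i : V) (h : V → ℝ)
    (b : Bool) : ℝ :=
  ∑ σ : V → Bool, if σ i = b then cavW β ℬ J i h σ else 0

noncomputable def cavC (β : ℝ) (ℬ : Finset (Finset V)) (J : ℬ → ℝ) (i : V) (h : V → ℝ) : ℝ :=
  (Real.log (cavA β ℬ J i h true) - Real.log (cavA β ℬ J i h false)) / 2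

lemma cavW_update (β : ℝ) (ℬ : Finset (Finset V)) (J : ℬ → ℝ) (i : V) (h : V → ℝ) (x : ℝ)
    (σ : V → Bool) : cavW β ℬ J i (Function.update h i x) σ = cavW β ℬ J i h σ := by
  unfold cavW
  have hs : (∑ j, (if j = i then 0 else Function.update h i x j * spinVal (σ j)))
      = ∑ j, (if j = i then 0 else h j * spinVal (σ j)) := by
    refine Finset.sum_congr rfl fun j _ => ?_
    by_cases hj : j = i
    · simp [hj]
    · simp [hj, Function.update_of_ne hj]
  rw [hs]

lemma cavA_update (β : ℝ) (ℬ : Finset (Finset V)) (J : ℬ → ℝ) (i : V) (h : V → ℝ) (x : ℝ)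
    (b : Bool) : cavA β ℬ J i (Function.update h i x) b = cavA β ℬ J i h b := by
  unfold cavA
  refine Finset.sum_congr rfl fun σ _ => ?_
  rw [cavW_update]

lemma cavC_update (β : ℝ) (ℬ : Finset (Finset V)) (J : ℬ → ℝ) (i : V) (h : V → ℝ) (x : ℝ) :
    cavC β ℬ J i (Function.update h i x) = cavC β ℬ J i h := by
  unfold cavC
  rw [cavA_update, cavA_update]

lemma cavA_pos (β : ℝ) (ℬ : Finset (Finset V)) (J : ℬ → ℝ) (i : V) (h : V → ℝ) (b : Bool) :
    0 < cavA β ℬ J i h b := by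
  unfold cavA
  have hw : ∀ σ : V → Bool, 0 < cavW β ℬ J i h σ := fun σ => Real.exp_pos _
  refine Finset.sum_pos' (fun σ _ => ?_) ⟨fun _ => b, Finset.mem_univ _, ?_⟩
  · by_cases hσ : σ i = b
    · simpa [hσ] using (hw σ).le
    · simp [hσ]
  · simpa using hw (fun _ => b)

lemma exponent_split (β : ℝ) (ℬ : Finset (Finset V)) (J : ℬ → ℝ) (i : V) (h : V → ℝ)
    (σ : V → Bool) :
    Real.exp (β * ((∑ B : ℬ, J B * sigmaSet σ (B : Finset V)) + ∑ j, h j * spinVal (σ j)))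
      = cavW β ℬ J i h σ * Real.exp (β * h i * spinVal (σ i)) := by
  have hsum : ∑ j, h j * spinVal (σ j)
      = (∑ j, (if j = i then 0 else h j * spinVal (σ j))) + h i * spinVal (σ i) := by
    have : ∀ j ∈ Finset.univ, h j * spinVal (σ j)
        = (if j = i then 0 else h j * spinVal (σ j))
          + (if j = i then h i * spinVal (σ i) else 0) := by
      intro j _
      by_cases hj : j = i
      · simp [hj]
      · simp [hj]
    rw [Finset.sum_congr rfl this, Finset.sum_add_distrib]
    congr 1
    simp
  rw [hsum, cavW, ← Real.exp_add]
  congr 1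
  ring

lemma rfGibbs_eq_tanh (β : ℝ) (ℬ : Finset (Finset V)) (J : ℬ → ℝ) (h : V → ℝ) (i : V) :
    rfGibbs β ℬ J h i = Real.tanh (β * h i + cavC β ℬ J i h) := by
  set A := cavA β ℬ J i h true with hA
  set B := cavA β ℬ J i h false with hB
  have hApos := cavA_pos β ℬ J i h true
  have hBpos := cavA_pos β ℬ J i h false
  have hnum : (∑ σ : V → Bool, spinVal (σ i) *
      Real.exp (β * ((∑ B : ℬ, J B * sigmaSet σ (B : Finset V)) + ∑ j, h j * spinVal (σ j))))
      = A * Real.exp (β * h i) - B * Real.exp (-(β * h i)) := by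
    rw [hA, hB]
    unfold cavA
    rw [Finset.sum_mul, Finset.sum_mul, ← Finset.sum_sub_distrib]
    refine Finset.sum_congr rfl fun σ _ => ?_
    rw [exponent_split β ℬ J i h σ]
    cases hσ : σ i
    · simp [hσ, spinVal]
    · simp [hσ, spinVal]
  have hden : (∑ σ : V → Bool,
      Real.exp (β * ((∑ B : ℬ, J B * sigmaSet σ (B : Finset V)) + ∑ j, h j * spinVal (σ j))))
      = A * Real.exp (β * h i) + B * Real.exp (-(β * h i)) := by
    rw [hA, hB]
    unfold cavA
    rw [Finset.sum_mul, Finset.sum_mul, ← Finset.sum_add_distrib]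
    refine Finset.sum_congr rfl fun σ _ => ?_
    rw [exponent_split β ℬ J i h σ]
    cases hσ : σ i
    · simp [hσ, spinVal]
    · simp [hσ, spinVal]
  rw [rfGibbs, hnum, hden, ratio_tanh hApos hBpos]
  rfl

end Cav

lemma measurable_rfGibbs {V : Type} [Fintype V] [DecidableEq V] (β : ℝ)
    (ℬ : Finset (Finset V)) (i : V) :
    Measurable fun p : (ℬ → ℝ) × (V → ℝ) => rfGibbs β ℬ p.1 p.2 i := by
  have hterm : ∀ σ : V → Bool, Measurable fun p : (ℬ → ℝ) × (V → ℝ) =>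
      Real.exp (β * ((∑ B : ℬ, p.1 B * sigmaSet σ (B : Finset V))
        + ∑ j, p.2 j * spinVal (σ j))) := by
    intro σ
    apply Real.measurable_exp.comp
    apply Measurable.const_mul
    apply Measurable.add
    · exact Finset.measurable_sum _ fun B _ =>
        ((measurable_pi_apply B).comp measurable_fst).mul_const _
    · exact Finset.measurable_sum _ fun j _ =>
        ((measurable_pi_apply j).comp measurable_snd).mul_const _
  unfold rfGibbs
  exact (Finset.measurable_sum _ fun σ _ => (hterm σ).const_mul _).div
    (Finset.measurable_sum _ fun σ _ => hterm σ)


/-- **Random-field Ising model.** With arbitrary (deterministic or random) interactions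
`J_B` on sets of size at least two, distributed according to any probability measure `ν`,
and independent i.i.d. Gaussian fields `h_i ~ N(J_0, Λ²)`, the quenched average of the
square of the local magnetization satisfies
`E[tanh²(βh)]_{N(0, Λ²)} ≤ E[⟨σ_i⟩²]` for every site `i`. -/
theorem random_field_local_magnetization_square_lower_bound
    {V : Type} [Fintype V] [DecidableEq V]
    (ℬ : Finset (Finset V)) (hℬ : ∀ B ∈ ℬ, 2 ≤ B.card)
    (β : ℝ) (hβ : 0 < β)
    (ν : Measure (ℬ → ℝ)) [IsProbabilityMeasure ν]
    (J0 : ℝ) (Λ : NNReal) (hΛ : 0 < Λ)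
    (i : V) :
    ∫ x, Real.tanh (β * x) ^ 2 ∂(gaussianReal 0 (Λ ^ 2))
      ≤ ∫ p, rfGibbs β ℬ p.1 p.2 i ^ 2
          ∂(ν.prod (Measure.pi fun _ : V => gaussianReal J0 (Λ ^ 2))) := by
  set v : ℝ≥0 := Λ ^ 2 with hv_def
  have hv : v ≠ 0 := pow_ne_zero 2 hΛ.ne'
  set γ : Measure ℝ := gaussianReal J0 v with hγ
  set piV : Measure (V → ℝ) := Measure.pi fun _ : V => γ with hpiV
  set K : ℝ := ∫ x, Real.tanh (β * x) ^ 2 ∂(gaussianReal 0 v) with hK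
  have hK0 : 0 ≤ K := integral_nonneg fun x => sq_nonneg _
  have hFmeas : Measurable fun p : (ℬ → ℝ) × (V → ℝ) => rfGibbs β ℬ p.1 p.2 i ^ 2 :=
    (measurable_rfGibbs β ℬ i).pow_const 2
  have hF0 : ∀ p : (ℬ → ℝ) × (V → ℝ), 0 ≤ rfGibbs β ℬ p.1 p.2 i ^ 2 := fun p => sq_nonneg _
  have hF1 : ∀ (J : ℬ → ℝ) (h : V → ℝ), rfGibbs β ℬ J h i ^ 2 ≤ 1 := fun J h => by
    rw [rfGibbs_eq_tanh]; exact tanh_sq_le_one _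
  -- the one-site conditional bound
  have inner : ∀ (J : ℬ → ℝ) (x : V → ℝ),
      ENNReal.ofReal K
        ≤ ∫⁻ t, ENNReal.ofReal (rfGibbs β ℬ J (Function.update x i t) i ^ 2) ∂γ := by
    intro J x
    have hrw : ∀ t : ℝ, rfGibbs β ℬ J (Function.update x i t) i ^ 2
        = Real.tanh (β * t + cavC β ℬ J i x) ^ 2 := fun t => by
      rw [rfGibbs_eq_tanh, cavC_update, Function.update_self]
    simp_rw [hrw]
    set c := cavC β ℬ J i x with hc
    have hmeas : Measurable fun t : ℝ => Real.tanh (β * t + c) ^ 2 :=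
      ((continuous_tanh.comp ((continuous_const.mul continuous_id).add
        continuous_const)).pow 2).measurable
    have hint : Integrable (fun t => Real.tanh (β * t + c) ^ 2) γ := by
      refine (integrable_const (1:ℝ)).mono' hmeas.aestronglyMeasurable (ae_of_all _ fun t => ?_)
      rw [Real.norm_eq_abs, abs_of_nonneg (sq_nonneg _)]
      exact tanh_sq_le_one _
    rw [← ofReal_integral_eq_lintegral_ofReal hint (ae_of_all _ fun t => sq_nonneg _)]
    apply ENNReal.ofReal_le_ofReal
    have hmap : γ = (gaussianReal 0 v).map (fun y => y + J0) := by
      rw [hγ, gaussianReal_map_add_const, zero_add]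
    rw [hmap, integral_map (measurable_id'.add_const J0).aemeasurable
      hmeas.aestronglyMeasurable]
    have harg : ∀ y : ℝ, β * (y + J0) + c = β * y + (β * J0 + c) := fun y => by ring
    simp_rw [harg]
    exact gaussian_tanh_sq_shift hv hβ (β * J0 + c)
  -- the bound for fixed couplings, integrating over all fields
  have perJ : ∀ J : ℬ → ℝ,
      ENNReal.ofReal K ≤ ∫⁻ h, ENNReal.ofReal (rfGibbs β ℬ J h i ^ 2) ∂piV := by
    intro J
    set f : (V → ℝ) → ℝ≥0∞ := fun h => ENNReal.ofReal (rfGibbs β ℬ J h i ^ 2) with hf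
    have hfmeas : Measurable f := (hFmeas.comp measurable_prodMk_left).ennreal_ofReal
    have hmarg : MeasureTheory.lmarginal (fun _ : V => γ) {i} (fun _ => ENNReal.ofReal K)
        ≤ MeasureTheory.lmarginal (fun _ : V => γ) {i} f := by
      rw [MeasureTheory.lmarginal_singleton, MeasureTheory.lmarginal_singleton]
      refine Pi.le_def.mpr fun x => ?_
      calc (∫⁻ _, ENNReal.ofReal K ∂γ) = ENNReal.ofReal K := by
            simp [lintegral_const]
        _ ≤ _ := inner J x
    have hle := MeasureTheory.lintegral_le_of_lmarginal_le (μ := fun _ : V => γ) {i}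
      measurable_const hfmeas hmarg
    calc ENNReal.ofReal K = ∫⁻ _, ENNReal.ofReal K ∂piV := by simp [lintegral_const]
      _ ≤ _ := hle
  rw [integral_eq_lintegral_of_nonneg_ae (ae_of_all _ fun p => hF0 p)
    hFmeas.aestronglyMeasurable]
  have hle : ENNReal.ofReal K
      ≤ ∫⁻ p, ENNReal.ofReal (rfGibbs β ℬ p.1 p.2 i ^ 2) ∂(ν.prod piV) := by
    rw [lintegral_prod _ hFmeas.ennreal_ofReal.aemeasurable]
    calc ENNReal.ofReal K = ∫⁻ _, ENNReal.ofReal K ∂ν := by simp [lintegral_const]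
      _ ≤ _ := lintegral_mono fun J => perJ J
  have hne : (∫⁻ p, ENNReal.ofReal (rfGibbs β ℬ p.1 p.2 i ^ 2) ∂(ν.prod piV)) ≠ ⊤ := by
    have hb : (∫⁻ p, ENNReal.ofReal (rfGibbs β ℬ p.1 p.2 i ^ 2) ∂(ν.prod piV)) ≤ 1 := by
      calc (∫⁻ p, ENNReal.ofReal (rfGibbs β ℬ p.1 p.2 i ^ 2) ∂(ν.prod piV))
          ≤ ∫⁻ _, (1:ℝ≥0∞) ∂(ν.prod piV) :=
            lintegral_mono fun p => ENNReal.ofReal_le_one.mpr (hF1 p.1 p.2)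
        _ = 1 := by simp
    exact ne_top_of_le_ne_top ENNReal.one_ne_top hb
  calc K = (ENNReal.ofReal K).toReal := (ENNReal.toReal_ofReal hK0).symm
    _ ≤ _ := ENNReal.toReal_mono hne hle
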